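/- If the ridge parameter satisfies ρ ≥ ‖x_{n+1}‖₂ · max_{1≤i≤n} ‖x_i‖₂ (with ρ > 0), then the elastic net conformal prediction set at x_{n+1} is an interval. -/

import Mathlib

open scoped BigOperators Matrix

noncomputable section

/-- Euclidean inner product on `Fin p → ℝ`. -/
def dotp {p : ℕ} (a b : Fin p → ℝ) : ℝ := ∑ j, a j * b j

/-- The elastic net objective
`G(β) = (1/2)∑ᵢ (yᵢ − xᵢ'β)² + λ‖β‖₁ + (ρ/2)‖β‖₂²`. -/
def enObj {n p : ℕ} (x : Fin n → Fin p → ℝ) (y : Fin n → ℝ) (lam ρ : ℝ)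
    (β : Fin p → ℝ) : ℝ :=
  (1 / 2) * ∑ i, (y i - dotp (x i) β) ^ 2 + lam * ∑ j, |β j| + (ρ / 2) * ∑ j, (β j) ^ 2

/-- The augmented elastic net objective with `(x_{n+1}, ynew)` added as the `(n+1)`-th sample. -/
def enAug {n p : ℕ} (x : Fin n → Fin p → ℝ) (y : Fin n → ℝ) (xnew : Fin p → ℝ)
    (lam ρ : ℝ) (ynew : ℝ) (β : Fin p → ℝ) : ℝ :=
  enObj x y lam ρ β + (1 / 2) * (ynew - dotp xnew β) ^ 2

/-- The conformal p-value `p̂_y = 1 − (n+1)⁻¹·#{1 ≤ i ≤ n+1 : |r_i(y)| ≤ |r_{n+1}(y)|}`, where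
`r_i(y) = y_i − x_i'β̃(y)` for `i ≤ n` and `r_{n+1}(y) = y − x_{n+1}'β̃(y)`; the `+1` in the
numerator accounts for the index `i = n+1`, which always satisfies `|r_{n+1}| ≤ |r_{n+1}|`. -/
def pvalConf {n p : ℕ} (x : Fin n → Fin p → ℝ) (y : Fin n → ℝ) (xnew : Fin p → ℝ)
    (βt : ℝ → Fin p → ℝ) (t : ℝ) : ℝ :=
  1 - (((Finset.univ.filter fun i : Fin n =>
        |y i - dotp (x i) (βt t)| ≤ |t - dotp xnew (βt t)|).card + 1 : ℝ)) / (n + 1)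

set_option maxHeartbeats 1000000 in
lemma dotp_add' {p : ℕ} (a b c : Fin p → ℝ) (θ : ℝ) :
    dotp a (fun j => b j + θ * c j) = dotp a b + θ * dotp a c := by
  simp [dotp, mul_add, Finset.sum_add_distrib, Finset.mul_sum, mul_left_comm]

lemma dotp_sub' {p : ℕ} (a b c : Fin p → ℝ) :
    dotp a (fun j => b j - c j) = dotp a b - dotp a c := by
  simp [dotp, mul_sub, Finset.sum_sub_distrib]

set_option maxHeartbeats 1000000 in
lemma en_bregman {n p : ℕ} (x : Fin n → Fin p → ℝ) (y : Fin n → ℝ) (xnew : Fin p → ℝ)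
    (lam ρ : ℝ) (hlam : 0 ≤ lam) (hρ : 0 ≤ ρ) (t : ℝ) (m β : Fin p → ℝ)
    (hm : ∀ γ, enAug x y xnew lam ρ t m ≤ enAug x y xnew lam ρ t γ) :
    enAug x y xnew lam ρ t m + (ρ/2) * ∑ j, (β j - m j)^2
      + (1/2) * (dotp xnew (fun j => β j - m j))^2 ≤ enAug x y xnew lam ρ t β := by
  set d : Fin p → ℝ := fun j => β j - m j with hd
  have hβsplit : ∀ a : Fin p → ℝ, dotp a β = dotp a m + dotp a d := by
    intro a; rw [hd, dotp_sub']; ring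
  set S1 := ∑ i, (y i - dotp (x i) m)^2 with hS1
  set S2 := ∑ i, (y i - dotp (x i) β)^2 with hS2
  set S3 := ∑ i, (dotp (x i) d)^2 with hS3
  set T1 := ∑ j, |m j| with hT1
  set T2 := ∑ j, |β j| with hT2
  set U1 := ∑ j, (m j)^2 with hU1
  set U2 := ∑ j, (β j)^2 with hU2
  set U3 := ∑ j, (d j)^2 with hU3
  set V1 := (t - dotp xnew m)^2 with hV1
  set V2 := (t - dotp xnew β)^2 with hV2
  set V3 := (dotp xnew d)^2 with hV3
  have hS3n : 0 ≤ S3 := Finset.sum_nonneg fun i _ => sq_nonneg _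
  have hU3n : 0 ≤ U3 := Finset.sum_nonneg fun j _ => sq_nonneg _
  have hV3n : 0 ≤ V3 := sq_nonneg _
  set Q : ℝ := (1/2) * S3 + (1/2) * V3 + (ρ/2) * U3 with hQ
  have hQ0 : 0 ≤ Q := by rw [hQ]; positivity
  have hkey : ∀ θ : ℝ, 0 < θ → θ ≤ 1 →
      enAug x y xnew lam ρ t m + (1-θ) * Q ≤ enAug x y xnew lam ρ t β := by
    intro θ hθ0 hθ1
    have hmin := hm (fun j => m j + θ * d j)
    have hA : ∑ i, (y i - dotp (x i) (fun j => m j + θ * d j))^2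
        = (1-θ) * S1 + θ * S2 - θ*(1-θ) * S3 := by
      rw [hS1, hS2, hS3, Finset.mul_sum, Finset.mul_sum, Finset.mul_sum,
        ← Finset.sum_add_distrib, ← Finset.sum_sub_distrib]
      refine Finset.sum_congr rfl fun i _ => ?_
      rw [dotp_add', hβsplit]; ring
    have hB : ∑ j, (m j + θ * d j)^2 = (1-θ) * U1 + θ * U2 - θ*(1-θ) * U3 := by
      rw [hU1, hU2, hU3, Finset.mul_sum, Finset.mul_sum, Finset.mul_sum,
        ← Finset.sum_add_distrib, ← Finset.sum_sub_distrib]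
      refine Finset.sum_congr rfl fun j _ => ?_
      have hb : β j = m j + d j := by rw [hd]; ring
      rw [hb]; ring
    have hC : (t - dotp xnew (fun j => m j + θ * d j))^2
        = (1-θ) * V1 + θ * V2 - θ*(1-θ) * V3 := by
      rw [hV1, hV2, hV3, dotp_add', hβsplit]; ring
    have hD : ∑ j, |m j + θ * d j| ≤ (1-θ) * T1 + θ * T2 := by
      rw [hT1, hT2, Finset.mul_sum, Finset.mul_sum, ← Finset.sum_add_distrib]
      refine Finset.sum_le_sum fun j _ => ?_
      have h1 : m j + θ * d j = (1-θ) * m j + θ * β j := by rw [hd]; ring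
      calc |m j + θ * d j| = |(1-θ) * m j + θ * β j| := by rw [h1]
        _ ≤ |(1-θ) * m j| + |θ * β j| := abs_add_le _ _
        _ = (1-θ) * |m j| + θ * |β j| := by
            rw [abs_mul, abs_mul, abs_of_nonneg (by linarith), abs_of_nonneg hθ0.le]
    have hD' := mul_le_mul_of_nonneg_left hD hlam
    simp only [enAug, enObj] at hmin ⊢
    rw [hA, hB, hC, ← hS1, ← hT1, ← hU1, ← hV1] at hmin
    rw [← hS1, ← hT1, ← hU1, ← hV1, ← hS2, ← hT2, ← hU2, ← hV2, hQ]
    -- hmin : (1/2)S1+lam T1+(ρ/2)U1+(1/2)V1 ≤ (1/2)((1-θ)S1+θS2-θ(1-θ)S3)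
    --        + lam*∑|m+θd| + (ρ/2)(...) + (1/2)(...)
    have h5 : (1/2)*S1 + lam*T1 + (ρ/2)*U1 + (1/2)*V1
        ≤ (1/2)*((1-θ)*S1 + θ*S2 - θ*(1-θ)*S3) + lam*((1-θ)*T1 + θ*T2)
          + (ρ/2)*((1-θ)*U1 + θ*U2 - θ*(1-θ)*U3)
          + (1/2)*((1-θ)*V1 + θ*V2 - θ*(1-θ)*V3) := by linarith [hmin, hD']
    clear hmin hA hB hC hD hD' hβsplit hm hd hS1 hS2 hS3 hT1 hT2 hU1 hU2 hU3 hV1 hV2 hV3 hQ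
    clear_value d S1 S2 S3 T1 T2 U1 U2 U3 V1 V2 V3 Q
    set E : ℝ := ((1/2)*S2 + lam*T2 + (ρ/2)*U2 + (1/2)*V2)
        - ((1/2)*S1 + lam*T1 + (ρ/2)*U1 + (1/2)*V1)
        - (1-θ) * ((1/2)*S3 + (1/2)*V3 + (ρ/2)*U3) with hE
    have h7 : 0 ≤ θ * E := by rw [hE]; linarith [h5]
    have h8 : 0 ≤ E := by
      rcases le_or_gt 0 E with h | h
      · exact h
      · nlinarith [h7, mul_pos hθ0 (neg_pos.2 h)]
    rw [hE] at h8
    linarith [h8]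
  clear hm hβsplit hd hS1 hS2 hS3 hT1 hT2 hU1 hU2 hU3 hV1 hV2 hV3
  clear_value d S1 S2 S3 T1 T2 U1 U2 U3 V1 V2 V3 Q
  -- pass to the limit θ → 0
  have hfinal : enAug x y xnew lam ρ t m + Q ≤ enAug x y xnew lam ρ t β := by
    by_contra hcon
    push_neg at hcon
    set ε : ℝ := enAug x y xnew lam ρ t m + Q - enAug x y xnew lam ρ t β with hε
    have hε0 : 0 < ε := by rw [hε]; linarith
    set θ : ℝ := min 1 (ε / (2 * (Q + 1))) with hθ
    have hθ0 : 0 < θ := lt_min one_pos (by positivity)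
    have hθ1 : θ ≤ 1 := min_le_left _ _
    have h1 : θ * Q ≤ ε / 2 := by
      have h2 : θ ≤ ε / (2 * (Q + 1)) := min_le_right _ _
      have h3 : θ * Q ≤ (ε / (2 * (Q + 1))) * (Q + 1) :=
        mul_le_mul h2 (by linarith) hQ0 (by positivity)
      have h4 : (ε / (2 * (Q + 1))) * (Q + 1) = ε / 2 := by field_simp
      linarith [h3, h4.le]
    have h6 := hkey θ hθ0 hθ1
    clear_value θ ε
    nlinarith [h6, h1, hε0, hcon, hε]
  have hextra : (ρ/2) * U3 + (1/2) * V3 ≤ Q := by rw [hQ]; linarith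
  linarith
lemma abs_dotp_le {p : ℕ} (a b : Fin p → ℝ) :
    |dotp a b| ≤ Real.sqrt (∑ j, a j ^ 2) * Real.sqrt (∑ j, b j ^ 2) := by
  have h := Finset.sum_mul_sq_le_sq_mul_sq Finset.univ a b
  have h1 : |dotp a b| = Real.sqrt ((dotp a b) ^ 2) := (Real.sqrt_sq_eq_abs _).symm
  rw [h1, ← Real.sqrt_mul (by positivity)]
  exact Real.sqrt_le_sqrt (by simpa [dotp] using h)

lemma en_star {n p : ℕ} (x : Fin n → Fin p → ℝ) (y : Fin n → ℝ) (xnew : Fin p → ℝ)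
    (lam ρ : ℝ) (hlam : 0 ≤ lam) (hρ : 0 ≤ ρ) (βt : ℝ → Fin p → ℝ)
    (hβt : ∀ t : ℝ, ∀ β, enAug x y xnew lam ρ t (βt t) ≤ enAug x y xnew lam ρ t β)
    (s t : ℝ) :
    ρ * ∑ j, (βt t j - βt s j)^2 + (dotp xnew (fun j => βt t j - βt s j))^2
      ≤ (t - s) * dotp xnew (fun j => βt t j - βt s j) := by
  have h1 := en_bregman x y xnew lam ρ hlam hρ t (βt t) (βt s) (fun γ => hβt t γ)
  have h2 := en_bregman x y xnew lam ρ hlam hρ s (βt s) (βt t) (fun γ => hβt s γ)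
  have hsq : ∑ j, (βt s j - βt t j)^2 = ∑ j, (βt t j - βt s j)^2 :=
    Finset.sum_congr rfl fun j _ => by ring
  have hdot : dotp xnew (fun j => βt s j - βt t j)
      = - dotp xnew (fun j => βt t j - βt s j) := by
    rw [dotp_sub', dotp_sub']; ring
  rw [hsq, hdot] at h1
  have e1 : enAug x y xnew lam ρ t (βt s) - enAug x y xnew lam ρ s (βt s)
      = (1/2)*(t - dotp xnew (βt s))^2 - (1/2)*(s - dotp xnew (βt s))^2 := by
    simp only [enAug]; ring
  have e2 : enAug x y xnew lam ρ t (βt t) - enAug x y xnew lam ρ s (βt t)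
      = (1/2)*(t - dotp xnew (βt t))^2 - (1/2)*(s - dotp xnew (βt t))^2 := by
    simp only [enAug]; ring
  have hc : dotp xnew (fun j => βt t j - βt s j) = dotp xnew (βt t) - dotp xnew (βt s) :=
    dotp_sub' _ _ _
  rw [hc] at h1 h2 ⊢
  nlinarith [h1, h2, e1, e2]
lemma en_res_key {n p : ℕ} (x : Fin n → Fin p → ℝ) (y : Fin n → ℝ) (xnew : Fin p → ℝ)
    (lam ρ : ℝ) (hlam : 0 ≤ lam) (hρ : 0 < ρ)
    (hρbig : ∀ i, Real.sqrt (∑ j, (xnew j) ^ 2) * Real.sqrt (∑ j, (x i j) ^ 2) ≤ ρ)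
    (βt : ℝ → Fin p → ℝ)
    (hβt : ∀ t : ℝ, ∀ β, enAug x y xnew lam ρ t (βt t) ≤ enAug x y xnew lam ρ t β)
    (s t : ℝ) (hst : s ≤ t) :
    0 ≤ (t - dotp xnew (βt t)) - (s - dotp xnew (βt s)) ∧
    ∀ i, |dotp (x i) (fun j => βt t j - βt s j)|
        ≤ (t - dotp xnew (βt t)) - (s - dotp xnew (βt s)) := by
  set d : Fin p → ℝ := fun j => βt t j - βt s j with hd
  set c : ℝ := dotp xnew d with hc
  set D : ℝ := ∑ j, (d j)^2 with hD
  have hstar : ρ * D + c^2 ≤ (t - s) * c := en_star x y xnew lam ρ hlam hρ.le βt hβt s t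
  have hD0 : 0 ≤ D := Finset.sum_nonneg fun j _ => sq_nonneg _
  have hc0 : 0 ≤ c := by
    by_contra hneg
    push_neg at hneg
    have h1 : (t - s) * c ≤ 0 := mul_nonpos_of_nonneg_of_nonpos (by linarith) hneg.le
    nlinarith [mul_nonneg hρ.le hD0, mul_pos (neg_pos.2 hneg) (neg_pos.2 hneg)]
  have hRdiff : (t - dotp xnew (βt t)) - (s - dotp xnew (βt s)) = (t - s) - c := by
    rw [hc, hd, dotp_sub']; ring
  have he0 : 0 ≤ (t - s) - c := by
    rcases eq_or_lt_of_le hc0 with h0 | hcpos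
    · linarith
    · have h2 : c * c ≤ (t - s) * c := by nlinarith [mul_nonneg hρ.le hD0]
      have := le_of_mul_le_mul_right h2 hcpos
      linarith
  rw [hRdiff]
  refine ⟨he0, fun i => ?_⟩
  rcases eq_or_lt_of_le hD0 with hDz | hDpos
  · -- D = 0 ⇒ d = 0
    have hdz : ∀ j, d j = 0 := by
      intro j
      have h3 := (Finset.sum_eq_zero_iff_of_nonneg (fun j _ => sq_nonneg (d j))).mp hDz.symm
      have := h3 j (Finset.mem_univ j)
      exact pow_eq_zero_iff (n := 2) (by norm_num) |>.mp this
    have : dotp (x i) d = 0 := by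
      rw [dotp]
      exact Finset.sum_eq_zero fun j _ => by rw [hdz j, mul_zero]
    rw [this, abs_zero]; exact he0
  · set e : ℝ := (t - s) - c with he
    set Na : ℝ := Real.sqrt (∑ j, (xnew j)^2) with hNa
    set Ni : ℝ := Real.sqrt (∑ j, (x i j)^2) with hNi
    have hNa0 : 0 ≤ Na := Real.sqrt_nonneg _
    have hNi0 : 0 ≤ Ni := Real.sqrt_nonneg _
    have hsD0 : 0 < Real.sqrt D := Real.sqrt_pos.mpr hDpos
    have hsD : Real.sqrt D * Real.sqrt D = D := Real.mul_self_sqrt hD0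
    have hCSa : c ≤ Na * Real.sqrt D := by
      refine le_trans (le_abs_self c) ?_
      rw [hc, hNa, hD]
      exact abs_dotp_le xnew d
    have hCSi : |dotp (x i) d| ≤ Ni * Real.sqrt D := by
      rw [hNi, hD]
      exact abs_dotp_le (x i) d
    have h9 : ρ * D ≤ c * e := by rw [he]; nlinarith [hstar]
    have h10 : c * e ≤ Na * Real.sqrt D * e := mul_le_mul_of_nonneg_right hCSa he0
    have h11 : ρ * Real.sqrt D ≤ Na * e := by
      apply le_of_mul_le_mul_right _ hsD0
      calc ρ * Real.sqrt D * Real.sqrt D = ρ * D := by rw [mul_assoc, hsD]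
        _ ≤ Na * Real.sqrt D * e := le_trans h9 h10
        _ = Na * e * Real.sqrt D := by ring
    have h12 : ρ * (Ni * Real.sqrt D) ≤ ρ * e := by
      have a1 := mul_le_mul_of_nonneg_left h11 hNi0
      have a2 := mul_le_mul_of_nonneg_right (hρbig i) he0
      rw [← hNi] at a2
      nlinarith [a1, a2]
    have h13 : Ni * Real.sqrt D ≤ e := le_of_mul_le_mul_left h12 hρ
    exact le_trans hCSi h13
lemma pval_eq {n p : ℕ} (x : Fin n → Fin p → ℝ) (y : Fin n → ℝ) (xnew : Fin p → ℝ)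
    (βt : ℝ → Fin p → ℝ) (t : ℝ) :
    pvalConf x y xnew βt t
      = 1 - (((Finset.univ.filter fun i : Fin n =>
          |y i - dotp (x i) (βt t)| ≤ |t - dotp xnew (βt t)|).card + 1 : ℝ)) / (n + 1) := rfl

/-- Corollary 2 of the paper: if the ridge parameter satisfies
`ρ ≥ ‖x_{n+1}‖₂ · max_{1≤i≤n} ‖x_i‖₂` (with `ρ > 0`), then the elastic net conformal
prediction set at `x_{n+1}`, i.e. `{y : p̂_y ≥ α}`, is an interval (order-connected set). -/
theorem elastic_net_conformal_set_interval {n p : ℕ} (x : Fin n → Fin p → ℝ)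
    (y : Fin n → ℝ) (xnew : Fin p → ℝ) (lam ρ : ℝ) (hlam : 0 < lam) (hρ : 0 < ρ)
    (α : ℝ) (hα : α ∈ Set.Ioo (0 : ℝ) 1)
    (hρbig : ∀ i, Real.sqrt (∑ j, (xnew j) ^ 2) * Real.sqrt (∑ j, (x i j) ^ 2) ≤ ρ)
    (βt : ℝ → Fin p → ℝ)
    (hβt : ∀ t : ℝ, ∀ β, enAug x y xnew lam ρ t (βt t) ≤ enAug x y xnew lam ρ t β) :
    {t : ℝ | α ≤ pvalConf x y xnew βt t}.OrdConnected := by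
  have hkey := en_res_key x y xnew lam ρ hlam.le hρ hρbig βt hβt
  constructor
  intro t1 h1 t2 h2 t ht
  simp only [Set.mem_setOf_eq] at h1 h2 ⊢
  obtain ⟨ht1, ht2⟩ := ht
  set F : ℝ → Finset (Fin n) := fun u => Finset.univ.filter fun i =>
      |y i - dotp (x i) (βt u)| ≤ |u - dotp xnew (βt u)| with hF
  have habs : ∀ a b : ℝ, |a - b| ≤ |a| + |b| := fun a b => by
    simpa [sub_eq_add_neg, abs_neg] using abs_add_le a (-b)
  have habs' : ∀ a b : ℝ, |a + b| ≤ |a| + |b| := fun a b => abs_add_le a b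
  have hcard : (F t).card ≤ (F t1).card ∨ (F t).card ≤ (F t2).card := by
    rcases le_or_gt 0 (t - dotp xnew (βt t)) with hRt | hRt
    · right
      apply Finset.card_le_card
      intro i hi
      simp only [hF, Finset.mem_filter, Finset.mem_univ, true_and] at hi ⊢
      obtain ⟨hmono, hres⟩ := hkey t t2 ht2
      have hresd := hres i
      have hR2 : 0 ≤ t2 - dotp xnew (βt t2) := by linarith
      rw [abs_of_nonneg hR2]
      rw [abs_of_nonneg hRt] at hi
      have hri : y i - dotp (x i) (βt t2)
          = (y i - dotp (x i) (βt t)) - dotp (x i) (fun j => βt t2 j - βt t j) := by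
        rw [dotp_sub']; ring
      calc |y i - dotp (x i) (βt t2)|
          ≤ |y i - dotp (x i) (βt t)| + |dotp (x i) (fun j => βt t2 j - βt t j)| := by
            rw [hri]; exact habs _ _
        _ ≤ (t - dotp xnew (βt t)) + ((t2 - dotp xnew (βt t2)) - (t - dotp xnew (βt t))) := by
            linarith
        _ = t2 - dotp xnew (βt t2) := by ring
    · left
      apply Finset.card_le_card
      intro i hi
      simp only [hF, Finset.mem_filter, Finset.mem_univ, true_and] at hi ⊢
      obtain ⟨hmono, hres⟩ := hkey t1 t ht1
      have hresd := hres i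
      rw [abs_of_neg hRt] at hi
      have hri : y i - dotp (x i) (βt t1)
          = (y i - dotp (x i) (βt t)) + dotp (x i) (fun j => βt t j - βt t1 j) := by
        rw [dotp_sub']; ring
      have hstep : |y i - dotp (x i) (βt t1)| ≤ -(t1 - dotp xnew (βt t1)) := by
        calc |y i - dotp (x i) (βt t1)|
            ≤ |y i - dotp (x i) (βt t)| + |dotp (x i) (fun j => βt t j - βt t1 j)| := by
              rw [hri]; exact habs' _ _
          _ ≤ -(t - dotp xnew (βt t)) + ((t - dotp xnew (βt t)) - (t1 - dotp xnew (βt t1))) := by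
              linarith
          _ = -(t1 - dotp xnew (βt t1)) := by ring
      exact hstep.trans (neg_le_abs _)
  have hpv : ∀ u v : ℝ, (F u).card ≤ (F v).card →
      pvalConf x y xnew βt v ≤ pvalConf x y xnew βt u := by
    intro u v huv
    rw [pval_eq, pval_eq]
    have hnum : ((F u).card + 1 : ℝ) ≤ ((F v).card + 1 : ℝ) := by
      have : ((F u).card : ℝ) ≤ ((F v).card : ℝ) := Nat.cast_le.mpr huv
      linarith
    have hle : (((F u).card + 1 : ℝ)) / (n + 1) ≤ (((F v).card + 1 : ℝ)) / (n + 1) := by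
      gcongr
    linarith
  rcases hcard with h | h
  · exact le_trans h1 (hpv t t1 h)
  · exact le_trans h2 (hpv t t2 h)
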